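/- For every n ≥ 1, the minimum number of leaves of a ternary decision tree computing the hazard-free extension of AND_n (the n-bit conjunction) equals exactly 2^{n+1} − 1. -/

import Mathlib

attribute [local instance 0] Classical.propDecidable

/-- Ternary values: `none` represents the uncertain value `u`,
`some b` represents the Boolean value `b`. -/
abbrev TVal := Option Bool

/-- The resolutions of `x ∈ {0,u,1}^ι`: all Boolean strings agreeing with
the determined coordinates of `x`. -/
def Res {ι : Type} (x : ι → Option Bool) : Set (ι → Bool) :=
  {y | ∀ i b, x i = some b → y i = b}

/-- The hazard-free extension of a Boolean function `f`. -/
noncomputable def hfext {ι : Type} (f : (ι → Bool) → Bool) (x : ι → Option Bool) :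
    Option Bool :=
  if ∀ y ∈ Res x, f y = true then some true
  else if ∀ y ∈ Res x, f y = false then some false
  else none

/-- Number of uncertain (`u`) coordinates of `x`. -/
noncomputable def uCount {ι : Type} [Fintype ι] (x : ι → Option Bool) : ℕ :=
  (Finset.univ.filter fun i : ι => x i = none).card

/-- u-sensitivity of `f` at `x`: the number of coordinates `i` such that
changing only coordinate `i` can change the value of the hazard-free extension. -/
noncomputable def sensAt {ι : Type} [Fintype ι] (f : (ι → Bool) → Bool)
    (x : ι → Option Bool) : ℕ :=
  (Finset.univ.filter fun i : ι => ∃ y : ι → Option Bool,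
      y i ≠ x i ∧ (∀ j, j ≠ i → y j = x j) ∧ hfext f y ≠ hfext f x).card

/-- u-sensitivity of `f`. -/
noncomputable def sensU {ι : Type} [Fintype ι] [DecidableEq ι]
    (f : (ι → Bool) → Bool) : ℕ :=
  Finset.univ.sup fun x : ι → Option Bool => sensAt f x

/-- u-sensitivity of `f` restricted to inputs whose hazard-free value is `b`. -/
noncomputable def sensULevel {ι : Type} [Fintype ι] [DecidableEq ι]
    (f : (ι → Bool) → Bool) (b : Option Bool) : ℕ :=
  (Finset.univ.filter fun x : ι → Option Bool => hfext f x = b).sup (sensAt f)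

/-- Boolean sensitivity of `f` at a Boolean input `x`. -/
noncomputable def boolSensAt {ι : Type} [Fintype ι] [DecidableEq ι]
    (f : (ι → Bool) → Bool) (x : ι → Bool) : ℕ :=
  (Finset.univ.filter fun i : ι => f (Function.update x i (!x i)) ≠ f x).card

/-- Boolean sensitivity of `f`. -/
noncomputable def boolSens {ι : Type} [Fintype ι] [DecidableEq ι]
    (f : (ι → Bool) → Bool) : ℕ :=
  Finset.univ.sup (boolSensAt f)

/-- There are `k` pairwise disjoint blocks, each of which is sensitive for the
hazard-free extension of `f` at `x`. -/
def HasSensBlocks {ι : Type} (f : (ι → Bool) → Bool) (x : ι → Option Bool)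
    (k : ℕ) : Prop :=
  ∃ (B : Fin k → Set ι) (y : Fin k → ι → Option Bool),
    (∀ j j', j ≠ j' → Disjoint (B j) (B j')) ∧
    ∀ j, (∀ i, y j i ≠ x i ↔ i ∈ B j) ∧ hfext f (y j) ≠ hfext f x

/-- u-block sensitivity of `f`. -/
noncomputable def bsU {ι : Type} (f : (ι → Bool) → Bool) : ℕ :=
  sSup {k | ∃ x, HasSensBlocks f x k}

/-- A ternary string `y` is consistent with a partial assignment
`p : ι → Option (Option Bool)` (`none` = `*`). -/
def Consistent {ι : Type} (y : ι → Option Bool) (p : ι → Option (Option Bool)) :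
    Prop :=
  ∀ i v, p i = some v → y i = v

/-- `p` is a certificate for the hazard-free extension of `f` at `x`. -/
def IsCert {ι : Type} (f : (ι → Bool) → Bool) (x : ι → Option Bool)
    (p : ι → Option (Option Bool)) : Prop :=
  Consistent x p ∧ ∀ y, Consistent y p → hfext f y = hfext f x

/-- Size of a partial assignment: the number of non-`*` coordinates. -/
noncomputable def certSize {ι : Type} [Fintype ι] (p : ι → Option (Option Bool)) :
    ℕ :=
  (Finset.univ.filter fun i : ι => p i ≠ none).card

/-- u-certificate complexity of `f` at `x`. -/
noncomputable def ccAt {ι : Type} [Fintype ι] (f : (ι → Bool) → Bool)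
    (x : ι → Option Bool) : ℕ :=
  sInf {k | ∃ p, IsCert f x p ∧ certSize p = k}

/-- u-certificate complexity of `f`. -/
noncomputable def ccU {ι : Type} [Fintype ι] [DecidableEq ι]
    (f : (ι → Bool) → Bool) : ℕ :=
  Finset.univ.sup fun x : ι → Option Bool => ccAt f x

/-- u-certificate complexity of `f` restricted to inputs with hazard-free value `b`. -/
noncomputable def ccULevel {ι : Type} [Fintype ι] [DecidableEq ι]
    (f : (ι → Bool) → Bool) (b : Option Bool) : ℕ :=
  (Finset.univ.filter fun x : ι → Option Bool => hfext f x = b).sup (ccAt f)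

/-- A set of literals (at most one per variable), encoded as a partial Boolean
assignment `q : ι → Option Bool`, is an implicant of `f` if `f` is `true` on
every Boolean input extending `q`. -/
def IsImplicant {ι : Type} (f : (ι → Bool) → Bool) (q : ι → Option Bool) : Prop :=
  ∀ y : ι → Bool, (∀ i b, q i = some b → y i = b) → f y = true

/-- Dually, an implicate of `f` forces the value `false`. -/
def IsImplicate {ι : Type} (f : (ι → Bool) → Bool) (q : ι → Option Bool) : Prop :=
  ∀ y : ι → Bool, (∀ i b, q i = some b → y i = b) → f y = false

/-- `q'` is a (literal-)subset of `q`. -/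
def SubAsn {ι : Type} (q' q : ι → Option Bool) : Prop :=
  ∀ i b, q' i = some b → q i = some b

def IsPrimeImplicant {ι : Type} (f : (ι → Bool) → Bool) (q : ι → Option Bool) :
    Prop :=
  IsImplicant f q ∧ ∀ q', SubAsn q' q → q' ≠ q → ¬ IsImplicant f q'

def IsPrimeImplicate {ι : Type} (f : (ι → Bool) → Bool) (q : ι → Option Bool) :
    Prop :=
  IsImplicate f q ∧ ∀ q', SubAsn q' q → q' ≠ q → ¬ IsImplicate f q'

/-- Number of literals of a partial assignment. -/
noncomputable def asnSize {ι : Type} [Fintype ι] (q : ι → Option Bool) : ℕ :=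
  (Finset.univ.filter fun i : ι => q i ≠ none).card

/-- Ternary decision trees: internal nodes query a variable and branch on the
three possible values `0`, `u`, `1`; leaves output a value in `{0,u,1}`. -/
inductive TTree (ι : Type) : Type where
  | leaf : Option Bool → TTree ι
  | node : ι → TTree ι → TTree ι → TTree ι → TTree ι

namespace TTree

def eval {ι : Type} : TTree ι → (ι → Option Bool) → Option Bool
  | .leaf b, _ => b
  | .node i t0 tu t1, x =>
    match x i with
    | some false => eval t0 x
    | none => eval tu x
    | some true => eval t1 x

def depth {ι : Type} : TTree ι → ℕ
  | .leaf _ => 0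
  | .node _ t0 tu t1 => max (max t0.depth tu.depth) t1.depth + 1

/-- Size of a tree: its number of leaves. -/
def size {ι : Type} : TTree ι → ℕ
  | .leaf _ => 1
  | .node _ t0 tu t1 => t0.size + tu.size + t1.size

end TTree

/-- Boolean decision trees. -/
inductive BTree (ι : Type) : Type where
  | leaf : Bool → BTree ι
  | node : ι → BTree ι → BTree ι → BTree ι

namespace BTree

def eval {ι : Type} : BTree ι → (ι → Bool) → Bool
  | .leaf b, _ => b
  | .node i t0 t1, x => if x i then eval t1 x else eval t0 x

def depth {ι : Type} : BTree ι → ℕ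
  | .leaf _ => 0
  | .node _ t0 t1 => max t0.depth t1.depth + 1

/-- Size of a tree: its number of leaves. -/
def size {ι : Type} : BTree ι → ℕ
  | .leaf _ => 1
  | .node _ t0 t1 => t0.size + t1.size

end BTree

/-- Deterministic u-query complexity: minimal depth of a ternary decision tree
computing the hazard-free extension of `f`. -/
noncomputable def Du {ι : Type} (f : (ι → Bool) → Bool) : ℕ :=
  sInf {d | ∃ T : TTree ι, (∀ x, T.eval x = hfext f x) ∧ T.depth = d}

/-- Minimal number of leaves of a ternary decision tree computing the
hazard-free extension of `f`. -/
noncomputable def sizeU {ι : Type} (f : (ι → Bool) → Bool) : ℕ :=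
  sInf {s | ∃ T : TTree ι, (∀ x, T.eval x = hfext f x) ∧ T.size = s}

/-- Deterministic (Boolean) query complexity of `f`. -/
noncomputable def Dbool {ι : Type} (f : (ι → Bool) → Bool) : ℕ :=
  sInf {d | ∃ T : BTree ι, (∀ x, T.eval x = f x) ∧ T.depth = d}

/-- Minimal number of leaves of a Boolean decision tree computing `f`. -/
noncomputable def sizeBool {ι : Type} (f : (ι → Bool) → Bool) : ℕ :=
  sInf {s | ∃ T : BTree ι, (∀ x, T.eval x = f x) ∧ T.size = s}

/-- Index type for `MUX_n`: `n` selector bits and `2^n` data bits. -/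
abbrev MUXIdx (n : ℕ) := Fin n ⊕ (Fin n → Bool)

/-- The multiplexer function: output the data bit addressed by the selector bits. -/
def MUX (n : ℕ) (z : MUXIdx n → Bool) : Bool :=
  z (Sum.inr fun i => z (Sum.inl i))

namespace Stmt13Aux

/-- Closed form of the hazard-free extension of AND restricted to a set `S`. -/
noncomputable def H (n : ℕ) (S : Finset (Fin n)) (b : Option Bool)
    (x : Fin n → Option Bool) : Option Bool :=
  if ∃ i ∈ S, x i = some false then some false
  else if ∀ i ∈ S, x i = some true then b else none

lemma hfext_and (n : ℕ) (x : Fin n → Option Bool) :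
    hfext (fun y : Fin n → Bool => decide (∀ i, y i = true)) x
      = H n Finset.univ (some true) x := by
  have hy0 : (fun j => (x j).getD false) ∈ Res x := fun i b hb => by simp [hb]
  have hy1 : (fun j => (x j).getD true) ∈ Res x := fun i b hb => by simp [hb]
  unfold hfext H
  beta_reduce
  by_cases hE : ∃ i ∈ Finset.univ, x i = some false
  · obtain ⟨i, -, hi⟩ := hE
    have hE' : ∃ i ∈ Finset.univ, x i = some false := ⟨i, Finset.mem_univ i, hi⟩
    have hA : ¬ ∀ y ∈ Res x, decide (∀ j, y j = true) = true := by
      intro hall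
      have h0 := hall _ hy0
      simp only [decide_eq_true_eq] at h0
      have := h0 i
      simp [hi] at this
    have hB : ∀ y ∈ Res x, decide (∀ j, y j = true) = false := by
      intro y hy
      have hyi : y i = false := hy i false hi
      simp only [decide_eq_false_iff_not]
      intro hall
      simp [hall i] at hyi
    rw [if_neg hA, if_pos hB, if_pos hE']
  · by_cases hT : ∀ i ∈ Finset.univ, x i = some true
    · have hA : ∀ y ∈ Res x, decide (∀ j, y j = true) = true := by
        intro y hy
        simp only [decide_eq_true_eq]
        exact fun j => hy j true (hT j (Finset.mem_univ j))
      rw [if_pos hA, if_neg hE, if_pos hT]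
    · push_neg at hT
      obtain ⟨i0, -, hi0'⟩ := hT
      have hi0 : x i0 = none := by
        cases h : x i0 with
        | none => rfl
        | some b =>
          cases b with
          | false => exact absurd ⟨i0, Finset.mem_univ i0, h⟩ hE
          | true => exact absurd h hi0'
      have hA : ¬ ∀ y ∈ Res x, decide (∀ j, y j = true) = true := by
        intro hall
        have h0 := hall _ hy0
        simp only [decide_eq_true_eq] at h0
        have := h0 i0
        simp [hi0] at this
      have hB : ¬ ∀ y ∈ Res x, decide (∀ j, y j = true) = false := by
        intro hall
        have h1 := hall _ hy1
        simp only [decide_eq_false_iff_not] at h1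
        apply h1
        intro j
        cases hxj : x j with
        | none => simp [hxj]
        | some b =>
          cases b with
          | false => exact absurd ⟨j, Finset.mem_univ j, hxj⟩ hE
          | true => simp [hxj]
      have hT' : ¬ ∀ i ∈ Finset.univ, x i = some true := by
        intro h; exact hi0' (h i0 (Finset.mem_univ i0))
      rw [if_neg hA, if_neg hB, if_neg hE, if_neg hT']

lemma size_pos {ι : Type} (T : TTree ι) : 1 ≤ T.size := by
  induction T with
  | leaf b => simp [TTree.size]
  | node i t0 tu t1 h0 hu h1 => simp only [TTree.size]; omega

lemma H_erase_true {n : ℕ} {S : Finset (Fin n)} {i : Fin n} {b : Option Bool}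
    {x : Fin n → Option Bool} (hi : i ∈ S) (hx : x i = some true) :
    H n S b x = H n (S.erase i) b x := by
  unfold H
  have he : (∃ j ∈ S, x j = some false) ↔ (∃ j ∈ S.erase i, x j = some false) := by
    constructor
    · rintro ⟨j, hj, hf⟩
      refine ⟨j, Finset.mem_erase.2 ⟨?_, hj⟩, hf⟩
      rintro rfl; rw [hx] at hf; simp at hf
    · rintro ⟨j, hj, hf⟩
      exact ⟨j, Finset.mem_of_mem_erase hj, hf⟩
  have ha : (∀ j ∈ S, x j = some true) ↔ (∀ j ∈ S.erase i, x j = some true) := by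
    constructor
    · intro h j hj; exact h j (Finset.mem_of_mem_erase hj)
    · intro h j hj
      by_cases hji : j = i
      · rw [hji]; exact hx
      · exact h j (Finset.mem_erase.2 ⟨hji, hj⟩)
  by_cases hE : ∃ j ∈ S, x j = some false
  · rw [if_pos hE, if_pos (he.1 hE)]
  · rw [if_neg hE, if_neg (fun h => hE (he.2 h))]
    by_cases hA : ∀ j ∈ S, x j = some true
    · rw [if_pos hA, if_pos (ha.1 hA)]
    · rw [if_neg hA, if_neg (fun h => hA (ha.2 h))]

lemma H_erase_u {n : ℕ} {S : Finset (Fin n)} {i : Fin n} {b : Option Bool}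
    {x : Fin n → Option Bool} (hi : i ∈ S) (hx : x i = none) :
    H n S b x = H n (S.erase i) none x := by
  unfold H
  have he : (∃ j ∈ S, x j = some false) ↔ (∃ j ∈ S.erase i, x j = some false) := by
    constructor
    · rintro ⟨j, hj, hf⟩
      refine ⟨j, Finset.mem_erase.2 ⟨?_, hj⟩, hf⟩
      rintro rfl; rw [hx] at hf; simp at hf
    · rintro ⟨j, hj, hf⟩
      exact ⟨j, Finset.mem_of_mem_erase hj, hf⟩
  have hA : ¬ ∀ j ∈ S, x j = some true := by
    intro h; have := h i hi; rw [hx] at this; simp at this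
  by_cases hE : ∃ j ∈ S, x j = some false
  · rw [if_pos hE, if_pos (he.1 hE)]
  · rw [if_neg hE, if_neg (fun h => hE (he.2 h)), if_neg hA]
    by_cases hA' : ∀ j ∈ S.erase i, x j = some true
    · rw [if_pos hA']
    · rw [if_neg hA']

lemma lower (n : ℕ) (T : TTree (Fin n)) :
    ∀ (S : Finset (Fin n)) (b : Option Bool) (c : Fin n → Option Bool),
    b ≠ some false →
    (∀ x, (∀ i ∉ S, x i = c i) → T.eval x = H n S b x) →
    2 ^ (S.card + 1) - 1 ≤ T.size := by
  induction T with
  | leaf v =>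
    intro S b c hb hcorr
    have hS : S = ∅ := by
      by_contra hne
      obtain ⟨i, hi⟩ := Finset.nonempty_iff_ne_empty.2 hne
      set x1 : Fin n → Option Bool := fun j => if j ∈ S then some false else c j with hx1
      set x2 : Fin n → Option Bool := fun j => if j ∈ S then some true else c j with hx2
      have h1 := hcorr x1 (fun j hj => by simp [hx1, hj])
      have h2 := hcorr x2 (fun j hj => by simp [hx2, hj])
      rw [show TTree.eval (TTree.leaf v) x1 = v from rfl] at h1
      rw [show TTree.eval (TTree.leaf v) x2 = v from rfl] at h2
      have hH1 : H n S b x1 = some false := by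
        unfold H
        rw [if_pos ⟨i, hi, by simp [hx1, hi]⟩]
      have hH2 : H n S b x2 = b := by
        unfold H
        rw [if_neg, if_pos]
        · intro j hj; simp [hx2, hj]
        · rintro ⟨j, hj, hf⟩
          simp [hx2, hj] at hf
      rw [hH1] at h1; rw [hH2] at h2
      exact hb (by rw [← h2, h1])
    subst hS
    simp [TTree.size]
  | node i t0 tu t1 ih0 ihu ih1 =>
    intro S b c hb hcorr
    by_cases hiS : i ∈ S
    · have hcard : (S.erase i).card + 1 = S.card := Finset.card_erase_add_one hiS
      -- t1 branch
      have hT1 : 2 ^ ((S.erase i).card + 1) - 1 ≤ t1.size := by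
        apply ih1 (S.erase i) b (Function.update c i (some true)) hb
        intro x hx
        have hxi : x i = some true := by
          have := hx i (Finset.notMem_erase i S)
          rwa [Function.update_self] at this
        have hxS : ∀ j, j ∉ S → x j = c j := by
          intro j hj
          have hji : j ≠ i := by rintro rfl; exact hj hiS
          have := hx j (fun h => hj (Finset.mem_of_mem_erase h))
          rwa [Function.update_of_ne hji] at this
        have hT := hcorr x hxS
        rw [show TTree.eval (TTree.node i t0 tu t1) x = t1.eval x from by
          simp [TTree.eval, hxi]] at hT
        rw [hT, H_erase_true hiS hxi]
      have hTu : 2 ^ ((S.erase i).card + 1) - 1 ≤ tu.size := by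
        apply ihu (S.erase i) none (Function.update c i none) (by simp)
        intro x hx
        have hxi : x i = none := by
          have := hx i (Finset.notMem_erase i S)
          rwa [Function.update_self] at this
        have hxS : ∀ j, j ∉ S → x j = c j := by
          intro j hj
          have hji : j ≠ i := by rintro rfl; exact hj hiS
          have := hx j (fun h => hj (Finset.mem_of_mem_erase h))
          rwa [Function.update_of_ne hji] at this
        have hT := hcorr x hxS
        rw [show TTree.eval (TTree.node i t0 tu t1) x = tu.eval x from by
          simp [TTree.eval, hxi]] at hT
        rw [hT, H_erase_u hiS hxi]
      have hT0 : 1 ≤ t0.size := size_pos t0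
      have hpow : 1 ≤ 2 ^ (S.erase i).card := Nat.one_le_two_pow
      have h2 : 2 ^ (S.card + 1) = 2 ^ ((S.erase i).card + 1) * 2 := by
        rw [← hcard]; ring
      simp only [TTree.size]
      omega
    · -- i not in S : one child handles everything
      have key : ∀ x : Fin n → Option Bool, (∀ j, j ∉ S → x j = c j) → x i = c i := fun x hx => hx i hiS
      cases hci : c i with
      | none =>
        have h := ihu S b c hb (fun x hx => by
          have hxi : x i = none := by rw [key x hx, hci]
          have hT := hcorr x hx
          rwa [show TTree.eval (TTree.node i t0 tu t1) x = tu.eval x from by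
            simp [TTree.eval, hxi]] at hT)
        simp only [TTree.size]
        have := size_pos t0; have := size_pos t1
        omega
      | some bb =>
        cases bb with
        | false =>
          have h := ih0 S b c hb (fun x hx => by
            have hxi : x i = some false := by rw [key x hx, hci]
            have hT := hcorr x hx
            rwa [show TTree.eval (TTree.node i t0 tu t1) x = t0.eval x from by
              simp [TTree.eval, hxi]] at hT)
          simp only [TTree.size]
          have := size_pos tu; have := size_pos t1
          omega
        | true =>
          have h := ih1 S b c hb (fun x hx => by
            have hxi : x i = some true := by rw [key x hx, hci]
            have hT := hcorr x hx
            rwa [show TTree.eval (TTree.node i t0 tu t1) x = t1.eval x from by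
              simp [TTree.eval, hxi]] at hT)
          simp only [TTree.size]
          have := size_pos t0; have := size_pos tu
          omega

def mkB {n : ℕ} : List (Fin n) → TTree (Fin n)
  | [] => .leaf none
  | i :: l => .node i (.leaf (some false)) (mkB l) (mkB l)

def mkA {n : ℕ} : List (Fin n) → TTree (Fin n)
  | [] => .leaf (some true)
  | i :: l => .node i (.leaf (some false)) (mkB l) (mkA l)

lemma size_mkB {n : ℕ} (l : List (Fin n)) : (mkB l).size + 1 = 2 ^ (l.length + 1) := by
  induction l with
  | nil => simp [mkB, TTree.size]
  | cons i l ih =>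
    simp only [mkB, TTree.size, List.length_cons]
    rw [pow_succ]
    omega

lemma size_mkA {n : ℕ} (l : List (Fin n)) : (mkA l).size + 1 = 2 ^ (l.length + 1) := by
  induction l with
  | nil => simp [mkA, TTree.size]
  | cons i l ih =>
    have hB := size_mkB l
    simp only [mkA, TTree.size, List.length_cons]
    rw [pow_succ]
    omega

lemma eval_mkB {n : ℕ} (l : List (Fin n)) (x : Fin n → Option Bool) :
    (mkB l).eval x = if ∃ i ∈ l, x i = some false then some false else none := by
  induction l with
  | nil => simp [mkB, TTree.eval]
  | cons i l ih =>
    cases hxi : x i with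
    | none =>
      have : (mkB (i :: l)).eval x = (mkB l).eval x := by simp [mkB, TTree.eval, hxi]
      rw [this, ih]
      congr 1
      simp only [List.mem_cons, eq_iff_iff]
      constructor
      · rintro ⟨j, hj, hf⟩; exact ⟨j, Or.inr hj, hf⟩
      · rintro ⟨j, hj | hj, hf⟩
        · rw [hj, hxi] at hf; simp at hf
        · exact ⟨j, hj, hf⟩
    | some bb =>
      cases bb with
      | false =>
        have : (mkB (i :: l)).eval x = some false := by simp [mkB, TTree.eval, hxi]
        rw [this, if_pos ⟨i, List.mem_cons_self, hxi⟩]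
      | true =>
        have : (mkB (i :: l)).eval x = (mkB l).eval x := by simp [mkB, TTree.eval, hxi]
        rw [this, ih]
        congr 1
        simp only [List.mem_cons, eq_iff_iff]
        constructor
        · rintro ⟨j, hj, hf⟩; exact ⟨j, Or.inr hj, hf⟩
        · rintro ⟨j, hj | hj, hf⟩
          · rw [hj, hxi] at hf; simp at hf
          · exact ⟨j, hj, hf⟩

lemma eval_mkA {n : ℕ} (l : List (Fin n)) (x : Fin n → Option Bool) :
    (mkA l).eval x = if ∃ i ∈ l, x i = some false then some false
      else if ∀ i ∈ l, x i = some true then some true else none := by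
  induction l with
  | nil => simp [mkA, TTree.eval]
  | cons i l ih =>
    have hexiff : x i ≠ some false →
        ((∃ j ∈ i :: l, x j = some false) ↔ ∃ j ∈ l, x j = some false) := by
      intro hne
      simp only [List.mem_cons]
      constructor
      · rintro ⟨j, hj | hj, hf⟩
        · rw [hj] at hf; exact absurd hf hne
        · exact ⟨j, hj, hf⟩
      · rintro ⟨j, hj, hf⟩; exact ⟨j, Or.inr hj, hf⟩
    cases hxi : x i with
    | none =>
      have h1 : (mkA (i :: l)).eval x = (mkB l).eval x := by simp [mkA, TTree.eval, hxi]
      have hne : x i ≠ some false := by rw [hxi]; simp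
      rw [h1, eval_mkB, if_congr (hexiff hne) rfl rfl]
      by_cases hE : ∃ j ∈ l, x j = some false
      · rw [if_pos hE, if_pos hE]
      · rw [if_neg hE, if_neg hE, if_neg]
        intro h
        have := h i (List.mem_cons_self)
        rw [hxi] at this; simp at this
    | some bb =>
      cases bb with
      | false =>
        have h1 : (mkA (i :: l)).eval x = some false := by simp [mkA, TTree.eval, hxi]
        rw [h1, if_pos ⟨i, List.mem_cons_self, hxi⟩]
      | true =>
        have h1 : (mkA (i :: l)).eval x = (mkA l).eval x := by simp [mkA, TTree.eval, hxi]
        have hne : x i ≠ some false := by rw [hxi]; simp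
        rw [h1, ih, if_congr (hexiff hne) rfl rfl]
        by_cases hE : ∃ j ∈ l, x j = some false
        · rw [if_pos hE, if_pos hE]
        · rw [if_neg hE, if_neg hE]
          have hA : (∀ j ∈ i :: l, x j = some true) ↔ ∀ j ∈ l, x j = some true := by
            simp only [List.mem_cons]
            constructor
            · intro h j hj; exact h j (Or.inr hj)
            · rintro h j (rfl | hj)
              · exact hxi
              · exact h j hj
          rw [if_congr hA rfl rfl]

end Stmt13Aux

/-- `size_u(AND_n) = 2^{n+1} − 1`. -/
theorem stmt13 (n : ℕ) (hn : 1 ≤ n) :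
    sizeU (fun x : Fin n → Bool => decide (∀ i, x i = true)) = 2^(n+1) - 1 := by
  classical
  set f := fun x : Fin n → Bool => decide (∀ i, x i = true) with hf
  have hTeval : ∀ x, (Stmt13Aux.mkA (List.finRange n)).eval x = hfext f x := by
    intro x
    rw [Stmt13Aux.eval_mkA, Stmt13Aux.hfext_and]
    unfold Stmt13Aux.H
    simp only [List.mem_finRange, Finset.mem_univ, true_and, true_implies]
  have hsz : (Stmt13Aux.mkA (List.finRange n)).size = 2^(n+1) - 1 := by
    have h := Stmt13Aux.size_mkA (List.finRange n)
    rw [List.length_finRange] at h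
    omega
  have hmem : 2^(n+1) - 1 ∈
      {s | ∃ T : TTree (Fin n), (∀ x, T.eval x = hfext f x) ∧ T.size = s} :=
    ⟨_, hTeval, hsz⟩
  unfold sizeU
  apply le_antisymm
  · exact Nat.sInf_le hmem
  · apply le_csInf ⟨_, hmem⟩
    rintro s ⟨T, hT, rfl⟩
    have hlow := Stmt13Aux.lower n T Finset.univ (some true) (fun _ => none)
      (by simp) (fun x _ => by rw [hT, Stmt13Aux.hfext_and])
    simpa [Finset.card_univ] using hlow
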